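/- Let $A$ be a Noetherian integral domain and $S$ a multiplicative subset of $A \setminus \{0\}$ such that $A$ is integrally closed in the localization $S^{-1}A$. Let $a \in A \setminus \{0\}$ and let $\mathfrak{p}$ be a prime ideal of $A$ associated to the ideal $aA$. If $\mathfrak{p} \cap S$ is non-empty, then the localization $A_{\mathfrak{p}}$ is a discrete valuation ring and $\mathfrak{p}$ has height one. -/

import Mathlib

/-- Let `A` be a Noetherian integral domain and `S` a multiplicative subset of
`A \ {0}` such that `A` is integrally closed in the localization `S⁻¹A`.  Let `a ∈ A \ {0}` and
let `𝔭` be a prime ideal of `A` associated to the ideal `aA`.  If `𝔭 ∩ S ≠ ∅`, then the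
localization `A_𝔭` is a discrete valuation ring and `𝔭` has height one. -/
theorem stmt_0 {A : Type*} [CommRing A] [IsDomain A] [IsNoetherianRing A]
    (S : Submonoid A) (hS0 : (0 : A) ∉ S)
    (hIC : IsIntegrallyClosedIn A (Localization S))
    (a : A) (ha : a ≠ 0)
    (p : Ideal A) [hp' : p.IsPrime]
    (hp : IsAssociatedPrime p (A ⧸ Ideal.span ({a} : Set A)))
    (hpS : ∃ s ∈ S, s ∈ p) :
    IsDiscreteValuationRing (Localization.AtPrime p) ∧
      Order.height (⟨p, hp'⟩ : PrimeSpectrum A) = 1 := by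
  classical
  obtain ⟨s, hsS, hsp⟩ := hpS
  obtain ⟨-, b', hb'⟩ := isAssociatedPrime_iff.mp hp
  obtain ⟨b, rfl⟩ := Ideal.Quotient.mk_surjective b'
  -- membership characterization of `p`
  have hmem : ∀ x : A, x ∈ p ↔ a ∣ x * b := by
    intro x
    rw [hb', Submodule.mem_colon_singleton, Submodule.mem_bot]
    have : x • (Ideal.Quotient.mk (Ideal.span ({a} : Set A)) b)
        = Ideal.Quotient.mk (Ideal.span ({a} : Set A)) (x * b) := rfl
    rw [this, Ideal.Quotient.eq_zero_iff_mem, Ideal.mem_span_singleton]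
  have hbp : ¬ a ∣ b := by
    intro h
    exact hp'.ne_top ((Ideal.eq_top_iff_one p).mpr ((hmem 1).mpr (by simpa using h)))
  have hap : a ∈ p := (hmem a).mpr ⟨b, rfl⟩
  -- dichotomy
  by_cases H : ∃ t ∈ p, ∃ u, t * b = a * u ∧ u ∉ p
  · -- main case: the maximal ideal of `A_p` is principal
    obtain ⟨t, htp, u, htu, hup⟩ := H
    set L := Localization.AtPrime p
    set f := algebraMap A L with hf
    have hfinj : Function.Injective f :=
      IsLocalization.injective L p.primeCompl_le_nonZeroDivisors
    have hu : IsUnit (f u) :=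
      (IsLocalization.AtPrime.isUnit_to_map_iff L p u).mpr hup
    have hmap : Ideal.map f p = Ideal.span {f t} := by
      apply le_antisymm
      · rw [Ideal.map_le_iff_le_comap]
        intro x hx
        obtain ⟨c, hc⟩ := (hmem x).mp hx
        -- u * x = t * c
        have key : u * x = t * c := by
          have : a * (u * x) = a * (t * c) := by
            calc a * (u * x) = (a * u) * x := by ring
            _ = (t * b) * x := by rw [htu]
            _ = (x * b) * t := by ring
            _ = (a * c) * t := by rw [hc]
            _ = a * (t * c) := by ring
          exact mul_left_cancel₀ ha this
        rw [Ideal.mem_comap, Ideal.mem_span_singleton]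
        have : f t ∣ f u * f x := ⟨f c, by rw [← map_mul, ← map_mul, key]⟩
        exact (hu.dvd_mul_left).mp this
      · rw [Ideal.span_le, Set.singleton_subset_iff]
        exact Ideal.mem_map_of_mem f htp
    have hPrincipal : (IsLocalRing.maximalIdeal L).IsPrincipal := by
      rw [← Localization.AtPrime.map_eq_maximalIdeal, hmap]
      exact ⟨⟨f t, rfl⟩⟩
    haveI : IsNoetherianRing L :=
      IsLocalization.isNoetherianRing p.primeCompl L inferInstance
    have hnf : ¬ IsField L := by
      intro hfield
      have : f a ∈ IsLocalRing.maximalIdeal L :=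
        (IsLocalization.AtPrime.to_map_mem_maximal_iff L p a).mpr hap
      rw [IsLocalRing.isField_iff_maximalIdeal_eq.mp hfield] at this
      exact ha (hfinj (by simpa using this))
    have hDVR : IsDiscreteValuationRing L :=
      ((IsDiscreteValuationRing.TFAE L hnf).out 0 4).mpr hPrincipal
    refine ⟨hDVR, ?_⟩
    -- height computation
    haveI := hDVR
    have hponly : ∀ y : PrimeSpectrum A, y < (⟨p, hp'⟩ : PrimeSpectrum A) →
        y = ⟨⊥, Ideal.bot_prime⟩ := by
      intro y hy
      have hyle : y.asIdeal ≤ p := le_of_lt hy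
      have hdisj : Disjoint (p.primeCompl : Set A) (y.asIdeal : Set A) := by
        rw [Set.disjoint_left]
        intro z hz hz'
        exact hz (hyle hz')
      have hQ : (Ideal.map f y.asIdeal).IsPrime :=
        IsLocalization.isPrime_of_isPrime_disjoint p.primeCompl L y.asIdeal y.2 hdisj
      have hcomap : Ideal.comap f (Ideal.map f y.asIdeal) = y.asIdeal :=
        IsLocalization.comap_map_of_isPrime_disjoint p.primeCompl L y.2 hdisj
      by_contra hne
      have hybot : y.asIdeal ≠ ⊥ := fun h => hne (PrimeSpectrum.ext h)
      have hQbot : Ideal.map f y.asIdeal ≠ ⊥ := by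
        intro h
        apply hybot
        rw [← hcomap, h, ← RingHom.ker_eq_comap_bot, (RingHom.injective_iff_ker_eq_bot f).mp hfinj]
      haveI := hQ
      have hQmax : (Ideal.map f y.asIdeal).IsMaximal :=
        IsPrime.to_maximal_ideal hQbot
      have : Ideal.map f y.asIdeal = IsLocalRing.maximalIdeal L :=
        IsLocalRing.eq_maximalIdeal hQmax
      have : y.asIdeal = p := by
        rw [← hcomap, this]
        exact Localization.AtPrime.comap_maximalIdeal
      exact absurd (PrimeSpectrum.ext this) (ne_of_lt hy)
    have hbotlt : (⟨⊥, Ideal.bot_prime⟩ : PrimeSpectrum A) < ⟨p, hp'⟩ := by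
      refine lt_of_le_of_ne bot_le ?_
      intro h
      have : (⊥ : Ideal A) = p := congrArg PrimeSpectrum.asIdeal h
      exact ha (by rw [← this] at hap; simpa using hap)
    have hmin : IsMin (⟨⊥, Ideal.bot_prime⟩ : PrimeSpectrum A) := isMin_bot
    have hle : Order.height (⟨p, hp'⟩ : PrimeSpectrum A) ≤ 1 := by
      rw [show ((1 : ℕ∞)) = ((1 : ℕ) : ℕ∞) from rfl, Order.height_le_coe_iff]
      intro y hy
      rw [hponly y hy, Order.height_eq_zero.mpr hmin]
      exact_mod_cast zero_lt_one
    have hne : Order.height (⟨p, hp'⟩ : PrimeSpectrum A) ≠ 0 := by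
      simp only [ne_eq, Order.height_eq_zero]
      intro hm
      exact absurd (hm (le_of_lt hbotlt)) (not_le_of_gt hbotlt)
    exact le_antisymm hle (ENat.one_le_iff_ne_zero.mpr hne)
  · -- impossible case: `b/a` would be integral over `A`
    exfalso
    push_neg at H
    haveI := hIC
    set Loc := Localization S
    set g := algebraMap A Loc with hg
    have hSle : S ≤ nonZeroDivisors A := le_nonZeroDivisors_of_noZeroDivisors hS0
    haveI : IsDomain Loc := IsLocalization.isDomain_localization hSle
    have hginj : Function.Injective g := IsLocalization.injective Loc hSle
    obtain ⟨c₀, hc₀⟩ := (hmem s).mp hsp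
    set x : Loc := IsLocalization.mk' Loc c₀ (⟨s, hsS⟩ : S) with hx
    have hs0 : s ≠ 0 := fun h => hS0 (h ▸ hsS)
    have hgs : g s ≠ 0 := fun h => hs0 (hginj (by simpa using h))
    have hxs : x * g s = g c₀ := IsLocalization.mk'_spec Loc c₀ (⟨s, hsS⟩ : S)
    have hxa : x * g a = g b := by
      apply mul_right_cancel₀ hgs
      calc (x * g a) * g s = (x * g s) * g a := by ring
      _ = g c₀ * g a := by rw [hxs]
      _ = g (s * b) := by rw [← map_mul, hc₀]; ring_nf
      _ = g b * g s := by rw [map_mul]; ring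
    have hga : g a ≠ 0 := fun h => ha (hginj (by simpa using h))
    -- x maps p into p
    set N : Submodule A Loc := Submodule.map (Algebra.linearMap A Loc) (p : Submodule A A)
      with hN
    have hNne : N ≠ ⊥ := by
      intro h
      have : g a ∈ N := ⟨a, hap, rfl⟩
      rw [h] at this
      exact hga (by simpa using this)
    have hNfg : N.FG := (IsNoetherian.noetherian (p : Submodule A A)).map _
    have hxN : ∀ n ∈ N, x • n ∈ N := by
      rintro n ⟨t, htp, rfl⟩
      obtain ⟨c, hc⟩ := (hmem t).mp htp
      have hcp : c ∈ p := H t htp c hc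
      have hxt : x * g t = g c := by
        have : (x * g t) * g a = g c * g a := by
          calc (x * g t) * g a = g t * (x * g a) := by ring
          _ = g t * g b := by rw [hxa]
          _ = g (t * b) := by rw [map_mul]
          _ = g (a * c) := by rw [hc]
          _ = g c * g a := by rw [map_mul]; ring
        exact mul_right_cancel₀ hga this
      exact ⟨c, hcp, by simpa [smul_eq_mul] using hxt.symm⟩
    have hint : IsIntegral A x :=
      isIntegral_of_smul_mem_submodule N hNne hNfg x hxN
    obtain ⟨y, hy⟩ := IsIntegrallyClosedIn.isIntegral_iff.mp hint
    apply hbp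
    refine ⟨y, hginj ?_⟩
    rw [← hxa, ← hy, map_mul]
    ring
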